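/- Consider the linearized ADMM setting with variables x^k, x^{k+1} ∈ ℝ^p, y^k ∈ ℝ^q, γ^k ∈ ℝ^n, matrices A ∈ ℝ^{n×p}, B ∈ ℝ^{n×q}, functions g : ℝ^p × ℝ^q → ℝ (L_g-Lipschitz differentiable), f : ℝ^p → ℝ, h : ℝ^q → ℝ, and constants L_x > 0, β > 0. If x^{k+1} is a global minimizer of f̄^k, then L_β(x^k, y^k, γ^k) − L_β(x^{k+1}, y^k, γ^k) ≥ C0 ‖x^{k+1} − x^k‖², where C0 = (L_x − L_g − β L_A)/2 and L_A is the largest eigenvalue of AᵀA. -/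

import Mathlib

open Matrix Filter
open scoped RealInnerProductSpace

noncomputable section

abbrev Vec (m : ℕ) := EuclideanSpace ℝ (Fin m)

def mv {m l : ℕ} (M : Matrix (Fin m) (Fin l) ℝ) (v : Vec l) : Vec m := WithLp.toLp 2 (M.mulVec v)

def gradx {p q : ℕ} (g : Vec p → Vec q → ℝ) (x : Vec p) (y : Vec q) : Vec p :=
  gradient (fun x' => g x' y) x

def grady {p q : ℕ} (g : Vec p → Vec q → ℝ) (x : Vec p) (y : Vec q) : Vec q :=
  gradient (g x) y

def LipschitzDifferentiable {m : ℕ} (h : Vec m → ℝ) (L : ℝ) : Prop :=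
  Differentiable ℝ h ∧ ∀ y y' : Vec m, ‖gradient h y - gradient h y'‖ ≤ L * ‖y - y'‖

def LipschitzDifferentiable2 {p q : ℕ} (g : Vec p → Vec q → ℝ) (L : ℝ) : Prop :=
  (∀ y, Differentiable ℝ fun x => g x y) ∧ (∀ x, Differentiable ℝ (g x)) ∧
    ∀ x x' : Vec p, ∀ y y' : Vec q,
      Real.sqrt (‖gradx g x y - gradx g x' y'‖ ^ 2 + ‖grady g x y - grady g x' y'‖ ^ 2) ≤
        L * Real.sqrt (‖x - x'‖ ^ 2 + ‖y - y'‖ ^ 2)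

def Lagr {p q n : ℕ} (β : ℝ) (g : Vec p → Vec q → ℝ) (f : Vec p → ℝ) (h : Vec q → ℝ)
    (A : Matrix (Fin n) (Fin p) ℝ) (B : Matrix (Fin n) (Fin q) ℝ)
    (x : Vec p) (y : Vec q) (γ : Vec n) : ℝ :=
  g x y + f x + h y + ⟪γ, mv A x + mv B y⟫ + β / 2 * ‖mv A x + mv B y‖ ^ 2

def fbar {p q n : ℕ} (f : Vec p → ℝ) (g : Vec p → Vec q → ℝ)
    (A : Matrix (Fin n) (Fin p) ℝ) (B : Matrix (Fin n) (Fin q) ℝ) (β Lx : ℝ)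
    (xk : Vec p) (yk : Vec q) (γk : Vec n) (x : Vec p) : ℝ :=
  f x + ⟪γk, mv A x⟫ + Lx / 2 * ‖x - xk‖ ^ 2 +
    ⟪x - xk, gradx g xk yk + β • mv Aᵀ (mv A xk + mv B yk)⟫

def hbar {p q n : ℕ} (g : Vec p → Vec q → ℝ) (h : Vec q → ℝ)
    (A : Matrix (Fin n) (Fin p) ℝ) (B : Matrix (Fin n) (Fin q) ℝ) (β Ly : ℝ)
    (xk1 : Vec p) (yk : Vec q) (γk : Vec n) (y : Vec q) : ℝ :=
  ⟪γk, mv B y⟫ + Ly / 2 * ‖y - yk‖ ^ 2 + β / 2 * ‖mv A xk1 + mv B y‖ ^ 2 +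
    ⟪y - yk, grady g xk1 yk + gradient h yk⟫

def IsSmallestEigenvalue {m : ℕ} (M : Matrix (Fin m) (Fin m) ℝ) (lam : ℝ) : Prop :=
  (∃ v : Fin m → ℝ, v ≠ 0 ∧ M.mulVec v = lam • v) ∧
    ∀ μ : ℝ, (∃ v : Fin m → ℝ, v ≠ 0 ∧ M.mulVec v = μ • v) → lam ≤ μ

def IsLargestEigenvalue {m : ℕ} (M : Matrix (Fin m) (Fin m) ℝ) (lam : ℝ) : Prop :=
  (∃ v : Fin m → ℝ, v ≠ 0 ∧ M.mulVec v = lam • v) ∧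
    ∀ μ : ℝ, (∃ v : Fin m → ℝ, v ≠ 0 ∧ M.mulVec v = μ • v) → μ ≤ lam

def RegularSubgradientAt {m : ℕ} (f : Vec m → ℝ) (x₀ v : Vec m) : Prop :=
  ∀ ε > 0, ∀ᶠ x in nhds x₀, f x₀ + ⟪v, x - x₀⟫ - ε * ‖x - x₀‖ ≤ f x


lemma inner_mv_eq {m l : ℕ} (M : Matrix (Fin m) (Fin l) ℝ) (w : Vec m) (u : Vec l) :
    ⟪w, mv M u⟫ = ⟪mv Mᵀ w, u⟫ := by
  simp only [mv, PiLp.inner_apply, RCLike.inner_apply, conj_trivial]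
  have : (w : Fin m → ℝ) ⬝ᵥ (M *ᵥ u) = (Mᵀ *ᵥ w) ⬝ᵥ (u : Fin l → ℝ) := by
    rw [Matrix.dotProduct_mulVec, Matrix.mulVec_transpose]
  simpa [dotProduct, mul_comm] using this

lemma mv_add {m l : ℕ} (M : Matrix (Fin m) (Fin l) ℝ) (u v : Vec l) :
    mv M (u + v) = mv M u + mv M v := by
  ext i
  simp [mv, Matrix.mulVec, dotProduct, mul_add, Finset.sum_add_distrib]

lemma descent_lemma {m : ℕ} (G : Vec m → ℝ) (L : ℝ) (hdiff : Differentiable ℝ G)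
    (hlip : ∀ a b : Vec m, ‖gradient G a - gradient G b‖ ≤ L * ‖a - b‖)
    (x d : Vec m) :
    G (x + d) ≤ G x + ⟪gradient G x, d⟫ + L / 2 * ‖d‖ ^ 2 := by
  have hφ : ∀ t : ℝ, HasDerivAt (fun s : ℝ => G (x + s • d))
      ⟪gradient G (x + t • d), d⟫ t := by
    intro t
    have h1 : HasDerivAt (fun s : ℝ => x + s • d) d t := by
      simpa using ((hasDerivAt_id t).smul_const d).const_add x
    have h2 := (hdiff (x + t • d)).hasGradientAt
    have := h2.hasFDerivAt.comp_hasDerivAt t h1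
    simpa [Function.comp_def] using this
  set ρ : ℝ → ℝ := fun t => G x + t * ⟪gradient G x, d⟫ + L / 2 * t ^ 2 * ‖d‖ ^ 2
      - G (x + t • d) with hρ
  have hρ' : ∀ t : ℝ, HasDerivAt ρ
      (⟪gradient G x, d⟫ + L * t * ‖d‖ ^ 2 - ⟪gradient G (x + t • d), d⟫) t := by
    intro t
    have h3 : HasDerivAt (fun t : ℝ => G x + t * ⟪gradient G x, d⟫ + L / 2 * t ^ 2 * ‖d‖ ^ 2)
        (⟪gradient G x, d⟫ + L * t * ‖d‖ ^ 2) t := by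
      have ha : HasDerivAt (fun t : ℝ => t * ⟪gradient G x, d⟫) ⟪gradient G x, d⟫ t := by
        simpa using (hasDerivAt_id t).mul_const ⟪gradient G x, d⟫
      have hb : HasDerivAt (fun t : ℝ => L / 2 * t ^ 2 * ‖d‖ ^ 2) (L * t * ‖d‖ ^ 2) t := by
        have := ((hasDerivAt_pow 2 t).const_mul (L / 2)).mul_const (‖d‖ ^ 2)
        exact this.congr_deriv (by rw [show (2:ℕ) - 1 = 1 from rfl]; push_cast; ring)
      simpa [Pi.add_def] using ((ha.const_add (G x)).add hb)
    exact h3.sub (hφ t)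
  have hmono : MonotoneOn ρ (Set.Icc (0:ℝ) 1) := by
    apply monotoneOn_of_deriv_nonneg (convex_Icc 0 1)
    · exact fun t _ => ((hρ' t).continuousAt).continuousWithinAt
    · intro t _
      exact (hρ' t).differentiableAt.differentiableWithinAt
    · intro t ht
      rw [interior_Icc] at ht
      rw [(hρ' t).deriv]
      have key : ⟪gradient G (x + t • d), d⟫ - ⟪gradient G x, d⟫ ≤ L * t * ‖d‖ ^ 2 := by
        have h1 : ⟪gradient G (x + t • d) - gradient G x, d⟫
            ≤ ‖gradient G (x + t • d) - gradient G x‖ * ‖d‖ :=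
          real_inner_le_norm _ _
        have h2 : ‖gradient G (x + t • d) - gradient G x‖ ≤ L * (t * ‖d‖) := by
          have := hlip (x + t • d) x
          simpa [norm_smul, abs_of_pos ht.1, mul_assoc] using this
        have h3 : ‖gradient G (x + t • d) - gradient G x‖ * ‖d‖ ≤ L * (t * ‖d‖) * ‖d‖ :=
          mul_le_mul_of_nonneg_right h2 (norm_nonneg d)
        calc ⟪gradient G (x + t • d), d⟫ - ⟪gradient G x, d⟫
            = ⟪gradient G (x + t • d) - gradient G x, d⟫ := by
              rw [inner_sub_left]
          _ ≤ L * (t * ‖d‖) * ‖d‖ := le_trans h1 h3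
          _ = L * t * ‖d‖ ^ 2 := by ring
      linarith
  have h01 := hmono (Set.left_mem_Icc.2 one_pos.le) (Set.right_mem_Icc.2 one_pos.le) one_pos.le
  have e0 : ρ 0 = 0 := by
    simp only [hρ, zero_smul, add_zero, zero_mul, mul_zero, zero_pow, sub_self,
      OfNat.ofNat_ne_zero, ne_eq, not_false_iff]
  have e1 : ρ 1 = G x + ⟪gradient G x, d⟫ + L / 2 * ‖d‖ ^ 2 - G (x + d) := by
    simp only [hρ, one_smul, one_mul, one_pow, mul_one]
  rw [e0, e1] at h01
  linarith

lemma rayleigh_le {m : ℕ} (M : Matrix (Fin m) (Fin m) ℝ) (hM : M.IsHermitian) (lam : ℝ)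
    (hlam : ∀ μ : ℝ, (∃ v : Fin m → ℝ, v ≠ 0 ∧ M.mulVec v = μ • v) → μ ≤ lam)
    (v : Vec m) : ⟪v, mv M v⟫ ≤ lam * ‖v‖ ^ 2 := by
  set b := hM.eigenvectorBasis with hb
  have hev : ∀ i, hM.eigenvalues i ≤ lam := by
    intro i
    apply hlam
    refine ⟨b i, ?_, ?_⟩
    · intro h0
      have : ‖b i‖ = 1 := b.orthonormal.1 i
      rw [show (b i : Vec m) = 0 from WithLp.ofLp_injective 2 h0] at this
      simp at this
    · exact hM.mulVec_eigenvectorBasis i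
  have hrepr : ∀ i, b.repr (mv M v) i = hM.eigenvalues i * b.repr v i := by
    intro i
    rw [b.repr_apply_apply, b.repr_apply_apply]
    have hMT : Mᵀ = M := by
      have := hM
      rwa [Matrix.IsHermitian, Matrix.conjTranspose_eq_transpose_of_trivial] at this
    rw [inner_mv_eq, hMT]
    have : mv M (b i) = (hM.eigenvalues i : ℝ) • (b i : Vec m) := by
      have h := hM.mulVec_eigenvectorBasis i
      ext j
      simpa [mv] using congrFun h j
    rw [this, real_inner_smul_left]
  have hinner : ⟪v, mv M v⟫ = ∑ i, hM.eigenvalues i * (b.repr v i) ^ 2 := by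
    rw [← b.repr.inner_map_map v (mv M v)]
    simp only [PiLp.inner_apply, RCLike.inner_apply, conj_trivial]
    exact Finset.sum_congr rfl fun i _ => by rw [hrepr i]; ring
  have hnorm : ‖v‖ ^ 2 = ∑ i, (b.repr v i) ^ 2 := by
    rw [← real_inner_self_eq_norm_sq, ← b.repr.inner_map_map v v]
    simp only [PiLp.inner_apply, RCLike.inner_apply, conj_trivial]
    exact Finset.sum_congr rfl fun i _ => by ring
  rw [hinner, hnorm, Finset.mul_sum]
  exact Finset.sum_le_sum fun i _ =>
    mul_le_mul_of_nonneg_right (hev i) (sq_nonneg _)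


theorem statement4 {p q n : ℕ}
    (A : Matrix (Fin n) (Fin p) ℝ) (B : Matrix (Fin n) (Fin q) ℝ)
    (g : Vec p → Vec q → ℝ) (f : Vec p → ℝ) (h : Vec q → ℝ)
    (Lg : ℝ) (hg : LipschitzDifferentiable2 g Lg)
    (Lx β LA : ℝ) (hLx : 0 < Lx) (hβ : 0 < β)
    (hLA : IsLargestEigenvalue (Aᵀ * A) LA)
    (xk xk1 : Vec p) (yk : Vec q) (γk : Vec n)
    (hmin : ∀ x : Vec p,
      fbar f g A B β Lx xk yk γk xk1 ≤ fbar f g A B β Lx xk yk γk x) :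
    Lagr β g f h A B xk yk γk - Lagr β g f h A B xk1 yk γk ≥
      (Lx - Lg - β * LA) / 2 * ‖xk1 - xk‖ ^ 2 := by
  set d : Vec p := xk1 - xk with hd
  have hx1 : xk1 = xk + d := by rw [hd]; abel
  set w : Vec n := mv A xk + mv B yk with hw
  -- Lipschitz property for G := g · yk
  have hGlip : ∀ a b : Vec p,
      ‖gradient (fun x' => g x' yk) a - gradient (fun x' => g x' yk) b‖ ≤ Lg * ‖a - b‖ := by
    intro a b
    have h1 := hg.2.2 a b yk yk
    have h2 : ‖gradx g a yk - gradx g b yk‖ ≤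
        Real.sqrt (‖gradx g a yk - gradx g b yk‖ ^ 2 + ‖grady g a yk - grady g b yk‖ ^ 2) := by
      have h2' : Real.sqrt (‖gradx g a yk - gradx g b yk‖ ^ 2) ≤
          Real.sqrt (‖gradx g a yk - gradx g b yk‖ ^ 2 + ‖grady g a yk - grady g b yk‖ ^ 2) :=
        Real.sqrt_le_sqrt (le_add_of_nonneg_right (sq_nonneg _))
      rwa [Real.sqrt_sq (norm_nonneg _)] at h2'
    have h3 : Real.sqrt (‖a - b‖ ^ 2 + ‖yk - yk‖ ^ 2) = ‖a - b‖ := by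
      simp [Real.sqrt_sq (norm_nonneg (a - b))]
    rw [h3] at h1
    exact le_trans h2 h1
  -- descent lemma
  have F1 : g xk1 yk ≤ g xk yk + ⟪gradx g xk yk, d⟫ + Lg / 2 * ‖d‖ ^ 2 := by
    have := descent_lemma (fun x' => g x' yk) Lg (hg.1 yk) hGlip xk d
    rw [hx1]
    exact this
  -- minimality
  have F2 : f xk1 + ⟪γk, mv A xk1⟫ + Lx / 2 * ‖d‖ ^ 2 +
      (⟪d, gradx g xk yk⟫ + β * ⟪d, mv Aᵀ w⟫) ≤ f xk + ⟪γk, mv A xk⟫ := by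
    have hm := hmin xk
    simp only [fbar, sub_self, norm_zero, inner_zero_left, ne_eq, OfNat.ofNat_ne_zero,
      not_false_eq_true, zero_pow, mul_zero, add_zero] at hm
    rw [show xk1 - xk = d from rfl, inner_add_right, real_inner_smul_right] at hm
    rw [← hw] at hm
    linarith
  -- quadratic expansion
  have hAx1 : mv A xk1 = mv A xk + mv A d := by rw [hx1, mv_add]
  have hsum : mv A xk1 + mv B yk = w + mv A d := by rw [hAx1, hw]; abel
  have F5 : ‖mv A xk1 + mv B yk‖ ^ 2 = ‖w‖ ^ 2 + 2 * ⟪w, mv A d⟫ + ‖mv A d‖ ^ 2 := by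
    rw [hsum]; exact norm_add_sq_real w (mv A d)
  -- adjoint identities
  have F4 : ⟪d, mv Aᵀ w⟫ = ⟪w, mv A d⟫ := by
    rw [inner_mv_eq A w d, real_inner_comm]
  have F3 : ⟪d, gradx g xk yk⟫ = ⟪gradx g xk yk, d⟫ := real_inner_comm _ _
  -- Rayleigh bound
  have F6 : ‖mv A d‖ ^ 2 ≤ LA * ‖d‖ ^ 2 := by
    have h1 : ‖mv A d‖ ^ 2 = ⟪mv A d, mv A d⟫ := (real_inner_self_eq_norm_sq _).symm
    have h2 : ⟪mv A d, mv A d⟫ = ⟪d, mv (Aᵀ * A) d⟫ := by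
      rw [inner_mv_eq A (mv A d) d, real_inner_comm]
      congr 1
      simp [mv, Matrix.mulVec_mulVec]
    have hherm : (Aᵀ * A).IsHermitian := by
      have := Matrix.isHermitian_conjTranspose_mul_self A
      rwa [Matrix.conjTranspose_eq_transpose_of_trivial] at this
    rw [h1, h2]
    exact rayleigh_le _ hherm LA hLA.2 d
  have F6' : β / 2 * ‖mv A d‖ ^ 2 ≤ β / 2 * (LA * ‖d‖ ^ 2) :=
    mul_le_mul_of_nonneg_left F6 (by linarith)
  -- inner linearity for γk
  have F7 : ⟪γk, mv A xk1⟫ = ⟪γk, mv A xk⟫ + ⟪γk, mv A d⟫ := by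
    rw [hAx1, inner_add_right]
  have F8 : ⟪γk, mv A xk1 + mv B yk⟫ = ⟪γk, w⟫ + ⟪γk, mv A d⟫ := by
    rw [hsum, inner_add_right]
  -- assemble
  simp only [Lagr, ← hw, F5, F8]
  rw [show ‖xk1 - xk‖ = ‖d‖ from rfl]
  nlinarith [F1, F2, F3, F4, F6', F7, sq_nonneg ‖d‖]
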